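/- (Characterization of the sail for intersecting lines.) Let α, β be real affine forms on ℝ² with linearly independent linear parts, and let q be the unique intersection point of H_α = {α=0} and H_β = {β=0}. For x, y ∈ ℝ², x + iy ∈ S(α,β) if and only if EITHER (a) α(x)β(x) < 0 and y is tangent to the line through x and q (i.e., y ∈ ℝ·(x - q)), OR (b) x = q and y ≠ 0 and the line x + ℝ·y meets the open region {α·β < 0}. -/

import Mathlib

open Complex

noncomputable def affC (a : ℝ × ℝ) (b : ℝ) (x y : ℝ × ℝ) : ℂ :=
  (a.1 : ℂ) * ((x.1 : ℂ) + (y.1 : ℂ) * I) +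
  (a.2 : ℂ) * ((x.2 : ℂ) + (y.2 : ℂ) * I) + (b : ℂ)

def sailMem (a : ℝ × ℝ) (b : ℝ) (c : ℝ × ℝ) (d : ℝ) (x y : ℝ × ℝ) : Prop :=
  affC a b x y * affC c d x y ≠ 0 ∧
  ∃ r : ℝ, r < 0 ∧ affC a b x y / affC c d x y = (r : ℂ)

lemma ratio_neg_iff (z w : ℂ) :
    (z * w ≠ 0 ∧ ∃ r : ℝ, r < 0 ∧ z / w = (r : ℂ)) ↔
    (z.re * w.im - z.im * w.re = 0 ∧ z.re * w.re + z.im * w.im < 0) := by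
  constructor
  · rintro ⟨hzw, r, hr, hdiv⟩
    have hw : w ≠ 0 := fun h => hzw (by simp [h])
    have hz : z = (r : ℂ) * w := by
      field_simp at hdiv; linear_combination hdiv
    have hre : z.re = r * w.re := by rw [hz]; simp
    have him : z.im = r * w.im := by rw [hz]; simp
    have hwn : 0 < w.re * w.re + w.im * w.im := by
      have := Complex.normSq_pos.mpr hw
      rwa [Complex.normSq_apply] at this
    constructor
    · rw [hre, him]; ring
    · rw [hre, him]; nlinarith
  · rintro ⟨hcross, hdot⟩
    have hw : w ≠ 0 := by
      intro h; rw [h] at hdot; simp at hdot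
    have hwn : 0 < w.re * w.re + w.im * w.im := by
      have := Complex.normSq_pos.mpr hw
      rwa [Complex.normSq_apply] at this
    have hz : z ≠ 0 := by
      intro h; rw [h] at hdot; simp at hdot
    refine ⟨mul_ne_zero hz hw, (z.re * w.re + z.im * w.im) / (w.re * w.re + w.im * w.im),
      div_neg_of_neg_of_pos hdot hwn, ?_⟩
    rw [div_eq_iff hw, Complex.ext_iff]
    rw [Complex.mul_re, Complex.mul_im, Complex.ofReal_re, Complex.ofReal_im]
    constructor
    · rw [zero_mul, sub_zero, div_mul_eq_mul_div, eq_div_iff hwn.ne']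
      linear_combination w.im * hcross
    · rw [zero_mul, add_zero, div_mul_eq_mul_div, eq_div_iff hwn.ne']
      linear_combination (-w.re) * hcross
  
lemma zero_of_dots (a c : ℝ × ℝ) (v1 v2 : ℝ)
    (hlin : a.1 * c.2 - a.2 * c.1 ≠ 0)
    (h1 : a.1 * v1 + a.2 * v2 = 0) (h2 : c.1 * v1 + c.2 * v2 = 0) :
    v1 = 0 ∧ v2 = 0 := by
  constructor
  · have h : (a.1 * c.2 - a.2 * c.1) * v1 =
      c.2 * (a.1 * v1 + a.2 * v2) - a.2 * (c.1 * v1 + c.2 * v2) := by ring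
    rw [h1, h2] at h; simp at h
    rcases h with h | h
    · exact absurd h hlin
    · exact h
  · have h : (a.1 * c.2 - a.2 * c.1) * v2 =
      a.1 * (c.1 * v1 + c.2 * v2) - c.1 * (a.1 * v1 + a.2 * v2) := by ring
    rw [h1, h2] at h; simp at h
    rcases h with h | h
    · exact absurd h hlin
    · exact h

theorem sail_intersecting_characterization (a c : ℝ × ℝ) (b d : ℝ)
    (q : ℝ × ℝ) (x y : ℝ × ℝ)
    (hlin : a.1 * c.2 - a.2 * c.1 ≠ 0)
    (hqa : a.1 * q.1 + a.2 * q.2 + b = 0)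
    (hqc : c.1 * q.1 + c.2 * q.2 + d = 0) :
    sailMem a b c d x y ↔
      (((a.1 * x.1 + a.2 * x.2 + b) * (c.1 * x.1 + c.2 * x.2 + d) < 0 ∧
          ∃ s : ℝ, y = (s * (x.1 - q.1), s * (x.2 - q.2))) ∨
       (x = q ∧ y ≠ (0, 0) ∧
          ∃ s : ℝ,
            (a.1 * (x.1 + s * y.1) + a.2 * (x.2 + s * y.2) + b) *
            (c.1 * (x.1 + s * y.1) + c.2 * (x.2 + s * y.2) + d) < 0)) := by
  set A := a.1 * x.1 + a.2 * x.2 + b with hA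
  set C := c.1 * x.1 + c.2 * x.2 + d with hC
  set A' := a.1 * y.1 + a.2 * y.2 with hA'
  set C' := c.1 * y.1 + c.2 * y.2 with hC'
  have hza : affC a b x y = Complex.mk A A' := by
    apply Complex.ext <;> simp [affC, hA, hA']
  have hzc : affC c d x y = Complex.mk C C' := by
    apply Complex.ext <;> simp [affC, hC, hC']
  have hsail : sailMem a b c d x y ↔ (A * C' - A' * C = 0 ∧ A * C + A' * C' < 0) := by
    rw [sailMem, hza, hzc, ratio_neg_iff]
  rw [hsail]
  -- A = a·(x-q), C = c·(x-q)
  have hAu : A = a.1 * (x.1 - q.1) + a.2 * (x.2 - q.2) := by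
    rw [hA]; linarith [hqa]
  have hCu : C = c.1 * (x.1 - q.1) + c.2 * (x.2 - q.2) := by
    rw [hC]; linarith [hqc]
  constructor
  · rintro ⟨hcross, hdot⟩
    by_cases hAC : A = 0 ∧ C = 0
    · -- x = q case
      obtain ⟨hA0, hC0⟩ := hAC
      have hu := zero_of_dots a c (x.1 - q.1) (x.2 - q.2) hlin
        (hAu ▸ hA0) (hCu ▸ hC0)
      have hxq : x = q := by
        apply Prod.ext <;> [linarith [hu.1]; linarith [hu.2]]
      have hdot' : A' * C' < 0 := by
        rw [hA0, hC0] at hdot; linarith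
      refine Or.inr ⟨hxq, ?_, 1, ?_⟩
      · intro hy0
        have hA'0 : A' = 0 := by rw [hA', hy0]; simp
        rw [hA'0] at hdot'; simp at hdot'
      · have h1 : a.1 * (x.1 + 1 * y.1) + a.2 * (x.2 + 1 * y.2) + b = A + A' := by
          rw [hA, hA']; ring
        have h2 : c.1 * (x.1 + 1 * y.1) + c.2 * (x.2 + 1 * y.2) + d = C + C' := by
          rw [hC, hC']; ring
        rw [h1, h2, hA0, hC0]; simpa using hdot'
    · -- (A,C) ≠ 0: get s with (A',C') = s(A,C)
      have hs : ∃ s : ℝ, A' = s * A ∧ C' = s * C := by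
        by_cases hA0 : A = 0
        · have hC0 : C ≠ 0 := fun h => hAC ⟨hA0, h⟩
          have hA'0 : A' = 0 := by
            have : A' * C = 0 := by rw [hA0] at hcross; linarith
            rcases mul_eq_zero.mp this with h | h
            · exact h
            · exact absurd h hC0
          exact ⟨C' / C, by rw [hA'0, hA0]; ring, by field_simp⟩
        · refine ⟨A' / A, by field_simp, ?_⟩
          have : C' * A = A * C' := by ring
          field_simp
          rw [this]; linarith [hcross]
      obtain ⟨s, hsa, hsc⟩ := hs
      have hACneg : A * C < 0 := by
        rw [hsa, hsc] at hdot
        have hps : (0:ℝ) < 1 + s ^ 2 := by positivity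
        nlinarith [sq_nonneg s]
      refine Or.inl ⟨hACneg, s, ?_⟩
      -- y = s*(x-q): use zero_of_dots on v = y - s(x-q)
      have h1 : a.1 * (y.1 - s * (x.1 - q.1)) + a.2 * (y.2 - s * (x.2 - q.2)) = 0 := by
        have : a.1 * (y.1 - s * (x.1 - q.1)) + a.2 * (y.2 - s * (x.2 - q.2))
            = A' - s * A := by rw [hA', hAu]; ring
        rw [this, hsa]; ring
      have h2 : c.1 * (y.1 - s * (x.1 - q.1)) + c.2 * (y.2 - s * (x.2 - q.2)) = 0 := by
        have : c.1 * (y.1 - s * (x.1 - q.1)) + c.2 * (y.2 - s * (x.2 - q.2))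
            = C' - s * C := by rw [hC', hCu]; ring
        rw [this, hsc]; ring
      have hv := zero_of_dots a c _ _ hlin h1 h2
      have e1 : y.1 = s * (x.1 - q.1) := by linarith [hv.1]
      have e2 : y.2 = s * (x.2 - q.2) := by linarith [hv.2]
      rw [← e1, ← e2]
  · rintro (⟨hACneg, s, hy⟩ | ⟨hxq, hy0, s, hs⟩)
    · have hsa : A' = s * A := by
        rw [hA', hy, hAu]; simp; ring
      have hsc : C' = s * C := by
        rw [hC', hy, hCu]; simp; ring
      refine ⟨by rw [hsa, hsc]; ring, ?_⟩
      rw [hsa, hsc]; nlinarith [sq_nonneg s]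
    · have hA0 : A = 0 := by rw [hAu, hxq]; ring
      have hC0 : C = 0 := by rw [hCu, hxq]; ring
      have h1 : a.1 * (x.1 + s * y.1) + a.2 * (x.2 + s * y.2) + b = A + s * A' := by
        rw [hA, hA']; ring
      have h2 : c.1 * (x.1 + s * y.1) + c.2 * (x.2 + s * y.2) + d = C + s * C' := by
        rw [hC, hC']; ring
      rw [h1, h2, hA0, hC0] at hs
      simp at hs
      have hdot' : A' * C' < 0 := by nlinarith [sq_nonneg s]
      exact ⟨by rw [hA0, hC0]; ring, by rw [hA0, hC0]; nlinarith⟩
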